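/- For all real β, γ with βγ > 1, β ≤ γ, and for all x with 0 < x ≤ λ_c where λ_c = (γ/β)^(√(βγ)/(√(βγ)−1)), one has (βx+1)/(x+γ) ≤ 1. -/

import Mathlib

lemma aux_sinh (s w : ℝ) (hs : 1 ≤ s) (hw : 0 ≤ w) :
    s * Real.sinh w ≤ Real.sinh (s * w) := by
  set f : ℝ → ℝ := fun w => Real.sinh (s * w) - s * Real.sinh w with hf
  have hder : ∀ y : ℝ, HasDerivAt f (s * Real.cosh (s * y) - s * Real.cosh y) y := by
    intro y
    have h0 : HasDerivAt (fun w : ℝ => s * w) s y := by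
      simpa using (hasDerivAt_id y).const_mul s
    have h1 : HasDerivAt (fun w : ℝ => Real.sinh (s * w)) (Real.cosh (s * y) * s) y :=
      (Real.hasDerivAt_sinh (s * y)).comp y h0
    have h2 : HasDerivAt (fun w : ℝ => s * Real.sinh w) (s * Real.cosh y) y :=
      (Real.hasDerivAt_sinh y).const_mul s
    have h3 := h1.sub h2
    exact h3.congr_deriv (by ring)
  have hmono : MonotoneOn f (Set.Ici (0 : ℝ)) := by
    apply monotoneOn_of_deriv_nonneg (convex_Ici 0)
    · exact (Continuous.sub (Real.continuous_sinh.comp (continuous_const.mul continuous_id))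
        (continuous_const.mul Real.continuous_sinh)).continuousOn
    · intro y _
      exact (hder y).differentiableAt.differentiableWithinAt
    · intro y hy
      rw [(hder y).deriv]
      have hy0 : 0 ≤ y := le_of_lt (by simpa [interior_Ici] using hy)
      have hc : Real.cosh y ≤ Real.cosh (s * y) := by
        rw [Real.cosh_le_cosh, abs_of_nonneg hy0, abs_of_nonneg (by nlinarith)]
        nlinarith
      nlinarith
  have h0 : f 0 ≤ f w := hmono (by simp) (by simpa using hw) hw
  simp only [hf, mul_zero, Real.sinh_zero, sub_zero] at h0
  linarith [h0]

lemma aux_rpow (b s : ℝ) (hb : 1 ≤ b) (hs : 1 ≤ s) :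
    s * b ^ s * (b ^ 2 - 1) ≤ b * ((b ^ s) ^ 2 - 1) := by
  have hb0 : 0 < b := lt_of_lt_of_le one_pos hb
  set w := Real.log b with hw
  have hw0 : 0 ≤ w := Real.log_nonneg hb
  have hbe : Real.exp w = b := Real.exp_log hb0
  have hce : Real.exp (s * w) = b ^ s := by
    rw [Real.rpow_def_of_pos hb0, hw]; ring_nf
  set c := b ^ s with hc
  have hc0 : 0 < c := Real.rpow_pos_of_pos hb0 s
  have hsinh := aux_sinh s w hs hw0
  rw [Real.sinh_eq, Real.sinh_eq, Real.exp_neg, Real.exp_neg, hbe, hce] at hsinh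
  have key : s * (b - b⁻¹) ≤ c - c⁻¹ := by linarith
  have h1 : s * (b - b⁻¹) * (b * c) ≤ (c - c⁻¹) * (b * c) :=
    mul_le_mul_of_nonneg_right key (by positivity)
  have e1 : s * (b - b⁻¹) * (b * c) = s * c * (b ^ 2 - 1) := by
    field_simp
  have e2 : (c - c⁻¹) * (b * c) = b * (c ^ 2 - 1) := by
    field_simp
  rw [e1, e2] at h1
  exact h1

theorem stmt_0 (β γ x : ℝ) (hβ : 0 < β) (hγ : 0 < γ) (h1 : 1 < β * γ) (hle : β ≤ γ)
    (hx : 0 < x)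
    (hxc : x ≤ (γ / β) ^ (Real.sqrt (β * γ) / (Real.sqrt (β * γ) - 1))) :
    (β * x + 1) / (x + γ) ≤ 1 := by
  have hγ1 : 1 < γ := by nlinarith
  rw [div_le_one (by linarith)]
  rcases le_or_gt β 1 with hβ1 | hβ1
  · nlinarith
  · -- main case: 1 < β
    set s := Real.sqrt (β * γ) with hs
    have hs1 : 1 < s := by
      rw [hs]
      have h := Real.sqrt_lt_sqrt zero_le_one h1
      simpa using h
    have hssq : s ^ 2 = β * γ := Real.sq_sqrt (by positivity)
    set t := γ / β with ht
    have ht1 : 1 ≤ t := (one_le_div hβ).mpr hle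
    have ht0 : 0 < t := lt_of_lt_of_le one_pos ht1
    have hγt : γ = β * t := by rw [ht]; field_simp
    have hsne : (2 * (s - 1)) ≠ 0 := ne_of_gt (by linarith)
    set e := 1 / (2 * (s - 1)) with he
    have he0 : 0 < e := by rw [he]; exact one_div_pos.mpr (by linarith)
    set b := t ^ e with hbdef
    set a := t ^ (s * e) with hadef
    have hb1 : 1 ≤ b := Real.one_le_rpow ht1 (le_of_lt he0)
    have hb0 : 0 < b := lt_of_lt_of_le one_pos hb1
    have ha0 : 0 < a := Real.rpow_pos_of_pos ht0 _
    have hab : a = b ^ s := by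
      rw [hadef, hbdef, ← Real.rpow_mul ht0.le, mul_comm e s]
    have hexp : s * e + s * e = 1 + (e + e) := by
      have h' : e * (2 * (s - 1)) = 1 := by rw [he]; exact one_div_mul_cancel hsne
      linear_combination h'
    have hratio : a ^ 2 = t * b ^ 2 := by
      rw [hadef, hbdef, sq, sq, ← Real.rpow_add ht0, ← Real.rpow_add ht0, hexp,
        Real.rpow_add ht0, Real.rpow_one]
    have hlam : (γ / β) ^ (s / (s - 1)) = a ^ 2 := by
      rw [← ht, hadef, sq, ← Real.rpow_add ht0]
      congr 1
      rw [he]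
      have hs0 : s - 1 ≠ 0 := sub_ne_zero.mpr (ne_of_gt hs1)
      field_simp [hs0]
      ring
    rw [hlam] at hxc
    have hratio' : β * a ^ 2 = γ * b ^ 2 := by
      rw [hratio, hγt]; ring
    -- β * a = s * b
    have hβa : β * a = s * b := by
      have h3 : (β * a) ^ 2 = (s * b) ^ 2 := by
        linear_combination β * hratio' - b ^ 2 * hssq
      have h4 : Real.sqrt ((β * a) ^ 2) = Real.sqrt ((s * b) ^ 2) := by rw [h3]
      rwa [Real.sqrt_sq (by positivity), Real.sqrt_sq (by positivity)] at h4
    have hγb : γ * b = s * a := by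
      have h3 : (γ * b) ^ 2 = (s * a) ^ 2 := by
        linear_combination -γ * hratio' - a ^ 2 * hssq
      have h4 : Real.sqrt ((γ * b) ^ 2) = Real.sqrt ((s * a) ^ 2) := by rw [h3]
      rwa [Real.sqrt_sq (by positivity), Real.sqrt_sq (by positivity)] at h4
    have key : s * a * (b ^ 2 - 1) ≤ b * (a ^ 2 - 1) := by
      have h := aux_rpow b s hb1 hs1.le
      rw [← hab] at h
      linarith [h]
    -- combine: (β - 1) * a^2 ≤ γ - 1
    have hmain : (β - 1) * a ^ 2 ≤ γ - 1 := by
      have h2 : β * a ^ 2 * b = s * a * b ^ 2 := by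
        calc β * a ^ 2 * b = (β * a) * (a * b) := by ring
          _ = (s * b) * (a * b) := by rw [hβa]
          _ = s * a * b ^ 2 := by ring
      have h6 : b * ((β - 1) * a ^ 2) ≤ b * (γ - 1) := by nlinarith [key, h2, hγb]
      exact le_of_mul_le_mul_left h6 hb0
    have h5 : (β - 1) * x ≤ (β - 1) * a ^ 2 :=
      mul_le_mul_of_nonneg_left hxc (by linarith)
    linarith
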